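/- Let a be an indeterminate and work in ℤ[a][x,y,z]. Let φ(x,y,z) = (x³ + a·z³ − y·x², x³, x²·z) and let φ⁴ denote the fourth compositional iterate of φ, a triple of homogeneous polynomials of degree 81 in x, y, z. Then the greatest common divisor of the three components of φ⁴(x,y,z) is a homogeneous polynomial of degree 8 in x, y, z; equivalently, after dividing the three components by their gcd, the reduced fourth iterate consists of three coprime homogeneous polynomials of degree 73. -/

import Mathlib

open MvPolynomial

/-- The Hietarinta–Viallet map `φ(x,y,z) = (x³ + a·z³ − y·x², x³, x²·z)` over `ℤ[a]`,
with `a` the indeterminate of `Polynomial ℤ`. -/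
noncomputable def hvPhiZ
    (p : MvPolynomial (Fin 3) (Polynomial ℤ) × MvPolynomial (Fin 3) (Polynomial ℤ) ×
         MvPolynomial (Fin 3) (Polynomial ℤ)) :
    MvPolynomial (Fin 3) (Polynomial ℤ) × MvPolynomial (Fin 3) (Polynomial ℤ) ×
      MvPolynomial (Fin 3) (Polynomial ℤ) :=
  (p.1 ^ 3 + C Polynomial.X * p.2.2 ^ 3 - p.2.1 * p.1 ^ 2, p.1 ^ 3, p.1 ^ 2 * p.2.2)

namespace HVAux

noncomputable section

abbrev R3 := MvPolynomial (Fin 3) (Polynomial ℤ)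

def hA : R3 := C Polynomial.X
def hx : R3 := X 0
def hy : R3 := X 1
def hz : R3 := X 2

def P1 : R3 := hx ^ 3 + hA * hz ^ 3 - hy * hx ^ 2
def P2 : R3 := P1 ^ 2 * (hA * hz ^ 3 - hy * hx ^ 2) + hA * hx ^ 6 * hz ^ 3
def S : R3 := P2 ^ 2 * (hA * hx ^ 3 * hz ^ 3 - P1 ^ 2) + hA * P1 ^ 6 * hx ^ 3 * hz ^ 3
def hu : R3 := hx - hy
def hD : R3 := hu * (P1 + hA * hz ^ 3)
def hE : R3 := hA * hz ^ 3 * hD - hy * P1 ^ 2 + hA * hx ^ 4 * hz ^ 3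
def hG : R3 := 3 * hA ^ 2 * hz ^ 6 * hu + 3 * hA * hz ^ 3 * hx ^ 2 * hu ^ 2 + hx ^ 4 * hu ^ 3
def hH : R3 := 3 * hA ^ 6 * hz ^ 18 * hE + 3 * hA ^ 3 * hz ^ 9 * hx ^ 2 * hE ^ 2 + hx ^ 4 * hE ^ 3
def hE2 : R3 := 2 * hA ^ 3 * hz ^ 9 * hE + hx ^ 2 * hE ^ 2
def hK : R3 := hA ^ 6 * hz ^ 18 * hD + hA ^ 2 * hz ^ 6 * hE2 + hx ^ 2 * hE2 * hD
def hF : R3 := hA ^ 3 * hz ^ 9 * hH + hA ^ 9 * hz ^ 27 * hG + hx ^ 2 * hG * hH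
    + hx * hA ^ 5 * hz ^ 15 * (P2 ^ 2 + P1 ^ 6) - hA ^ 4 * hz ^ 12 * hK
def Q0 : R3 := hx * S ^ 3 - S ^ 2 * hH
    + hA * hz ^ 3 * (P1 ^ 3 * P2 ^ 3 - hA ^ 4 * hz ^ 12 * S) * hF
def Q1 : R3 := hx * S ^ 3
def Q2 : R3 := hz * S ^ 2 * P2 ^ 2 * P1 ^ 2

/-! ### Algebraic identities -/

lemma hP1sq : P1 ^ 2 = hA ^ 2 * hz ^ 6 + hx ^ 2 * hD := by
  unfold hD hu P1; ring

lemma hP2E : P2 = hA ^ 3 * hz ^ 9 + hx ^ 2 * hE := by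
  unfold hE hD hu P2 P1; ring

lemma hP1cube : P1 ^ 3 = hA ^ 3 * hz ^ 9 + hx ^ 2 * hG := by
  unfold hG hu P1; ring

lemma hP2cube : P2 ^ 3 = hA ^ 9 * hz ^ 27 + hx ^ 2 * hH := by
  unfold hH
  linear_combination (P2 ^ 2 + P2 * (hA ^ 3 * hz ^ 9 + hx ^ 2 * hE)
    + (hA ^ 3 * hz ^ 9 + hx ^ 2 * hE) ^ 2) * hP2E

lemma hP2sq : P2 ^ 2 = hA ^ 6 * hz ^ 18 + hx ^ 2 * hE2 := by
  unfold hE2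
  linear_combination (P2 + (hA ^ 3 * hz ^ 9 + hx ^ 2 * hE)) * hP2E

lemma hP2P1 : P2 ^ 2 * P1 ^ 2 = hA ^ 8 * hz ^ 24 + hx ^ 2 * hK := by
  unfold hK
  linear_combination P1 ^ 2 * hP2sq + (hA ^ 6 * hz ^ 18 + hx ^ 2 * hE2) * hP1sq

lemma hFeq : P1 ^ 3 * P2 ^ 3 + hA ^ 4 * hz ^ 12 * S = hx ^ 2 * hF := by
  unfold hF S
  linear_combination (hA ^ 9 * hz ^ 27 + hx ^ 2 * hH) * hP1cube + P1 ^ 3 * hP2cube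
    - hA ^ 4 * hz ^ 12 * hP2P1

lemma hKey : hx ^ 3 * S ^ 3 + hA * hz ^ 3 * P1 ^ 6 * P2 ^ 6 - S ^ 2 * P2 ^ 3 = hx ^ 2 * Q0 := by
  unfold Q0
  linear_combination (-(S ^ 2)) * hP2cube
    + hA * hz ^ 3 * (P1 ^ 3 * P2 ^ 3 - hA ^ 4 * hz ^ 12 * S) * hFeq

lemma hP2def : P2 - hA * hx ^ 6 * hz ^ 3 = P1 ^ 2 * (hA * hz ^ 3 - hy * hx ^ 2) := by
  unfold P2; ring

/-- Witness that `a³x¹⁵z⁹ ≡ S (mod P1)`. -/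
def W : R3 := P2 ^ 2 * P1 - hA * P1 ^ 5 * hx ^ 3 * hz ^ 3
    - hA * hx ^ 3 * hz ^ 3 * (P1 * (hA * hz ^ 3 - hy * hx ^ 2)) * (P2 + hA * hx ^ 6 * hz ^ 3)

lemma hW : hA ^ 3 * hx ^ 15 * hz ^ 9 = S + P1 * W := by
  unfold W S
  linear_combination (-(hA * hx ^ 3 * hz ^ 3 * (P2 + hA * hx ^ 6 * hz ^ 3))) * hP2def

/-! ### The four steps of the iteration -/

lemma step1 : hvPhiZ (X 0, X 1, X 2) = (P1, hx ^ 3, hx ^ 2 * hz) := by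
  unfold hvPhiZ P1 hA hx hy hz
  refine Prod.ext ?_ (Prod.ext ?_ ?_) <;> simp

lemma step2 : hvPhiZ (P1, hx ^ 3, hx ^ 2 * hz) = (P2, P1 ^ 3, P1 ^ 2 * (hx ^ 2 * hz)) := by
  unfold hvPhiZ
  refine Prod.ext ?_ (Prod.ext ?_ ?_) <;> simp
  · show P1 ^ 3 + hA * (hx ^ 2 * hz) ^ 3 - hx ^ 3 * P1 ^ 2 = P2
    unfold P2 P1; ring

lemma hP1def : P1 = hx ^ 3 + hA * hz ^ 3 - hy * hx ^ 2 := rfl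

lemma step3 : hvPhiZ (P2, P1 ^ 3, P1 ^ 2 * (hx ^ 2 * hz))
    = (hx ^ 3 * S, P2 ^ 3, P2 ^ 2 * (P1 ^ 2 * (hx ^ 2 * hz))) := by
  unfold hvPhiZ
  refine Prod.ext ?_ (Prod.ext ?_ ?_) <;> simp
  · show P2 ^ 3 + hA * (P1 ^ 2 * (hx ^ 2 * hz)) ^ 3 - P1 ^ 3 * P2 ^ 2 = hx ^ 3 * S
    unfold S
    linear_combination P2 ^ 2 * hP2def - P2 ^ 2 * P1 ^ 2 * hP1def

lemma step4 : hvPhiZ (hx ^ 3 * S, P2 ^ 3, P2 ^ 2 * (P1 ^ 2 * (hx ^ 2 * hz)))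
    = (hx ^ 8 * Q0, hx ^ 8 * Q1, hx ^ 8 * Q2) := by
  unfold hvPhiZ
  refine Prod.ext ?_ (Prod.ext ?_ ?_) <;> simp
  · show (hx ^ 3 * S) ^ 3 + hA * (P2 ^ 2 * (P1 ^ 2 * (hx ^ 2 * hz))) ^ 3
        - P2 ^ 3 * (hx ^ 3 * S) ^ 2 = hx ^ 8 * Q0
    linear_combination hx ^ 6 * hKey
  · show (hx ^ 3 * S) ^ 3 = hx ^ 8 * Q1
    unfold Q1; ring
  · show (hx ^ 3 * S) ^ 2 * (P2 ^ 2 * (P1 ^ 2 * (hx ^ 2 * hz))) = hx ^ 8 * Q2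
    unfold Q2; ring

lemma iterate4 : hvPhiZ^[4] (X 0, X 1, X 2) = (hx ^ 8 * Q0, hx ^ 8 * Q1, hx ^ 8 * Q2) := by
  have : hvPhiZ^[4] (X 0, X 1, X 2)
      = hvPhiZ (hvPhiZ (hvPhiZ (hvPhiZ (X 0, X 1, X 2)))) := rfl
  rw [this, step1, step2, step3, step4]

/-! ### Homogeneity -/

lemma hom_mul {p q : R3} {m n k : ℕ} (hp : p.IsHomogeneous m) (hq : q.IsHomogeneous n)
    (h : m + n = k) : (p * q).IsHomogeneous k := h ▸ hp.mul hq

lemma hom_pow {p : R3} {m n k : ℕ} (hp : p.IsHomogeneous m) (h : m * n = k) :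
    (p ^ n).IsHomogeneous k := h ▸ hp.pow n

lemma homA : hA.IsHomogeneous 0 := isHomogeneous_C _ _
lemma homx : hx.IsHomogeneous 1 := isHomogeneous_X _ _
lemma homy : hy.IsHomogeneous 1 := isHomogeneous_X _ _
lemma homz : hz.IsHomogeneous 1 := isHomogeneous_X _ _

lemma hom3 : (3 : R3).IsHomogeneous 0 := by
  have := isHomogeneous_C (Fin 3) (3 : Polynomial ℤ)
  rwa [map_ofNat] at this

lemma hom2 : (2 : R3).IsHomogeneous 0 := by
  have := isHomogeneous_C (Fin 3) (2 : Polynomial ℤ)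
  rwa [map_ofNat] at this

lemma homP1 : P1.IsHomogeneous 3 :=
  ((hom_pow homx rfl).add (hom_mul homA (hom_pow homz rfl) rfl)).sub
    (hom_mul homy (hom_pow homx rfl) rfl)

lemma homP2 : P2.IsHomogeneous 9 :=
  (hom_mul (hom_pow homP1 rfl) ((hom_mul homA (hom_pow homz rfl) rfl).sub
      (hom_mul homy (hom_pow homx rfl) rfl)) rfl).add
    (hom_mul (hom_mul homA (hom_pow homx rfl) rfl) (hom_pow homz rfl) rfl)

lemma homS : S.IsHomogeneous 24 :=
  (hom_mul (hom_pow homP2 rfl) ((hom_mul (hom_mul homA (hom_pow homx rfl) rfl)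
      (hom_pow homz rfl) rfl).sub (hom_pow homP1 rfl)) rfl).add
    (hom_mul (hom_mul (hom_mul homA (hom_pow homP1 rfl) rfl) (hom_pow homx rfl) rfl)
      (hom_pow homz rfl) rfl)

lemma homu : hu.IsHomogeneous 1 := homx.sub homy

lemma homD : hD.IsHomogeneous 4 :=
  hom_mul homu (homP1.add (hom_mul homA (hom_pow homz rfl) rfl)) rfl

lemma homE : hE.IsHomogeneous 7 :=
  ((hom_mul (hom_mul homA (hom_pow homz rfl) rfl) homD rfl).sub
      (hom_mul homy (hom_pow homP1 rfl) rfl)).add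
    (hom_mul (hom_mul homA (hom_pow homx rfl) rfl) (hom_pow homz rfl) rfl)

lemma homG : hG.IsHomogeneous 7 :=
  ((hom_mul (hom_mul (hom_mul hom3 (hom_pow homA rfl) rfl) (hom_pow homz rfl) rfl) homu rfl).add
      (hom_mul (hom_mul (hom_mul (hom_mul hom3 homA rfl) (hom_pow homz rfl) rfl)
        (hom_pow homx rfl) rfl) (hom_pow homu rfl) rfl)).add
    (hom_mul (hom_pow homx rfl) (hom_pow homu rfl) rfl)

lemma homH : hH.IsHomogeneous 25 :=
  ((hom_mul (hom_mul (hom_mul hom3 (hom_pow homA rfl) rfl) (hom_pow homz rfl) rfl) homE rfl).add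
      (hom_mul (hom_mul (hom_mul (hom_mul hom3 (hom_pow homA rfl) rfl) (hom_pow homz rfl) rfl)
        (hom_pow homx rfl) rfl) (hom_pow homE rfl) rfl)).add
    (hom_mul (hom_pow homx rfl) (hom_pow homE rfl) rfl)

lemma homE2 : hE2.IsHomogeneous 16 :=
  (hom_mul (hom_mul (hom_mul hom2 (hom_pow homA rfl) rfl) (hom_pow homz rfl) rfl) homE rfl).add
    (hom_mul (hom_pow homx rfl) (hom_pow homE rfl) rfl)

lemma homK : hK.IsHomogeneous 22 :=
  ((hom_mul (hom_mul (hom_pow homA rfl) (hom_pow homz rfl) rfl) homD rfl).add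
      (hom_mul (hom_mul (hom_pow homA rfl) (hom_pow homz rfl) rfl) homE2 rfl)).add
    (hom_mul (hom_mul (hom_pow homx rfl) homE2 rfl) homD rfl)

lemma homF : hF.IsHomogeneous 34 :=
  ((((hom_mul (hom_mul (hom_pow homA rfl) (hom_pow homz rfl) rfl) homH rfl).add
        (hom_mul (hom_mul (hom_pow homA rfl) (hom_pow homz rfl) rfl) homG rfl)).add
      (hom_mul (hom_mul (hom_pow homx rfl) homG rfl) homH rfl)).add
    (hom_mul (hom_mul (hom_mul homx (hom_pow homA rfl) rfl) (hom_pow homz rfl) rfl)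
      ((hom_pow homP2 rfl).add (hom_pow homP1 rfl)) rfl)).sub
    (hom_mul (hom_mul (hom_pow homA rfl) (hom_pow homz rfl) rfl) homK rfl)

lemma homQ0 : Q0.IsHomogeneous 73 :=
  ((hom_mul homx (hom_pow homS rfl) rfl).sub (hom_mul (hom_pow homS rfl) homH rfl)).add
    (hom_mul (hom_mul (hom_mul homA (hom_pow homz rfl) rfl)
      ((hom_mul (hom_pow homP1 rfl) (hom_pow homP2 rfl) rfl).sub
        (hom_mul (hom_mul (hom_pow homA rfl) (hom_pow homz rfl) rfl) homS rfl)) rfl) homF rfl)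

lemma homQ1 : Q1.IsHomogeneous 73 := hom_mul homx (hom_pow homS rfl) rfl

lemma homQ2 : Q2.IsHomogeneous 73 :=
  hom_mul (hom_mul (hom_mul homz (hom_pow homS rfl) rfl) (hom_pow homP2 rfl) rfl)
    (hom_pow homP1 rfl) rfl

lemma homg : (hx ^ 8 : R3).IsHomogeneous 8 := hom_pow homx rfl

/-! ### Evaluations -/

/-- Evaluation at `(x,y,z) = (0,1,1)`. -/
def ψ₁ : R3 →+* Polynomial ℤ := eval ![0, 1, 1]

/-- Evaluation at `(x,y,z) = (1,2,0)`. -/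
def ψ₂ : R3 →+* Polynomial ℤ := eval ![1, 2, 0]

/-- Evaluation at `a = 0`, `(x,y,z) = (1,2,1)`. -/
def Φ : R3 →+* ℤ := eval₂Hom (Polynomial.evalRingHom 0) ![1, 2, 1]

lemma not_dvd_of_eval {A : Type*} [CommRing A] (φ : R3 →+* A) {f g : R3}
    (h0 : φ f = 0) (h1 : φ g ≠ 0) : ¬ f ∣ g := by
  rintro ⟨c, rfl⟩
  exact h1 (by rw [map_mul, h0, zero_mul])

lemma ψ₁x : ψ₁ hx = 0 := by simp [ψ₁, hx]
lemma ψ₂z : ψ₂ hz = 0 := by simp [ψ₂, hz]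
lemma ΦA : Φ hA = 0 := by simp [Φ, hA]

lemma ψ₁P1 : ψ₁ P1 = Polynomial.X := by simp [ψ₁, P1, hA, hx, hy, hz]
lemma ψ₁P2 : ψ₁ P2 = Polynomial.X ^ 3 := by simp [ψ₂, P2, P1, hA, hx, hy, hz, ψ₁]; ring
lemma ψ₁S : ψ₁ S = -(Polynomial.X ^ 8) := by simp [ψ₁, S, P2, P1, hA, hx, hy, hz]; ring
lemma ψ₁Q2 : ψ₁ Q2 = Polynomial.X ^ 24 := by
  have : ψ₁ Q2 = ψ₁ hz * ψ₁ S ^ 2 * ψ₁ P2 ^ 2 * ψ₁ P1 ^ 2 := by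
    unfold Q2; push_cast [map_mul, map_pow]; ring
  rw [this, ψ₁S, ψ₁P2, ψ₁P1]
  have : ψ₁ hz = 1 := by simp [ψ₁, hz]
  rw [this]; ring

lemma ψ₂P1 : ψ₂ P1 = -1 := by simp [ψ₂, P1, hA, hx, hy, hz]; ring
lemma ψ₂P2 : ψ₂ P2 = -2 := by simp [ψ₂, P2, P1, hA, hx, hy, hz]; ring
lemma ψ₂S : ψ₂ S = -4 := by simp [ψ₂, S, P2, P1, hA, hx, hy, hz]; ring

lemma ΦP1 : Φ P1 = -1 := by simp [Φ, P1, hA, hx, hy, hz]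
lemma ΦP2 : Φ P2 = -2 := by simp [Φ, P2, P1, hA, hx, hy, hz]
lemma ΦS : Φ S = -4 := by simp [Φ, S, P2, P1, hA, hx, hy, hz]
lemma ΦQ1 : Φ Q1 = -64 := by
  have : Φ Q1 = Φ hx * Φ S ^ 3 := by unfold Q1; rw [map_mul, map_pow]
  rw [this, ΦS]
  have : Φ hx = 1 := by simp [Φ, hx]
  rw [this]; ring

lemma Q1_ne_zero : Q1 ≠ 0 := by
  intro h
  have := ΦQ1
  rw [h, map_zero] at this
  norm_num at this

/-! ### Primality facts -/

lemma primeX0 : Prime (hx : R3) := by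
  have key : (finSuccEquiv (Polynomial ℤ) 2).toMulEquiv (X 0 : R3) = Polynomial.X := by
    show (finSuccEquiv (Polynomial ℤ) 2) (X 0) = Polynomial.X
    exact finSuccEquiv_X_zero
  have h : Prime ((finSuccEquiv (Polynomial ℤ) 2).toMulEquiv (X 0 : R3)) := by
    rw [key]; exact Polynomial.prime_X
  exact (MulEquiv.prime_iff (finSuccEquiv (Polynomial ℤ) 2).toMulEquiv).mp h

lemma primeX2 : Prime (hz : R3) := by
  have key : (renameEquiv (Polynomial ℤ) (Equiv.swap (0 : Fin 3) 2)).toMulEquiv (X 0 : R3)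
      = (X 2 : R3) := by
    show (renameEquiv (Polynomial ℤ) (Equiv.swap (0 : Fin 3) 2)) (X 0) = X 2
    rw [renameEquiv_apply, rename_X, Equiv.swap_apply_left]
  have h := (MulEquiv.prime_iff (p := (X 0 : R3)) (renameEquiv (Polynomial ℤ) (Equiv.swap (0 : Fin 3) 2)).toMulEquiv).mpr
    (show Prime (X 0 : R3) from primeX0)
  rw [key] at h
  exact h

lemma primeA : Prime (hA : R3) :=
  (MvPolynomial.prime_C_iff (Fin 3)).mpr Polynomial.prime_X

/-- From a prime `p` dividing a prime `q`, conclude `q ∣ r` whenever `p ∣ r`. -/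
lemma dvd_of_prime_dvd_prime {p q r : R3} (hp : Prime p) (hq : Prime q)
    (hpq : p ∣ q) (hpr : p ∣ r) : q ∣ r :=
  ((hp.associated_of_dvd hq hpq).symm.dvd).trans hpr

/-! ### The coprimality of `Q0, Q1, Q2` -/

lemma caseP1 {p : R3} (hp : Prime p) (h1 : p ∣ P1) (hS : p ∣ S) : False := by
  have hdvd : p ∣ hA ^ 3 * hx ^ 15 * hz ^ 9 := by
    rw [hW]
    exact dvd_add hS (dvd_mul_of_dvd_left h1 _)
  rcases hp.dvd_mul.mp hdvd with h | h
  · rcases hp.dvd_mul.mp h with h | h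
    · -- p ∣ hA ^ 3
      have := dvd_of_prime_dvd_prime hp primeA (hp.dvd_of_dvd_pow h) h1
      exact not_dvd_of_eval Φ ΦA (by rw [ΦP1]; norm_num) this
    · -- p ∣ hx ^ 15
      have := dvd_of_prime_dvd_prime hp primeX0 (hp.dvd_of_dvd_pow h) h1
      exact not_dvd_of_eval ψ₁ ψ₁x (by rw [ψ₁P1]; exact Polynomial.X_ne_zero) this
  · -- p ∣ hz ^ 9
    have := dvd_of_prime_dvd_prime hp primeX2 (hp.dvd_of_dvd_pow h) h1
    exact not_dvd_of_eval ψ₂ ψ₂z (by rw [ψ₂P1]; norm_num) this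

lemma caseP2 {p : R3} (hp : Prime p) (h2 : p ∣ P2) (hS : p ∣ S) : False := by
  have hdvd : p ∣ hA * P1 ^ 6 * hx ^ 3 * hz ^ 3 := by
    have he : hA * P1 ^ 6 * hx ^ 3 * hz ^ 3
        = S - P2 ^ 2 * (hA * hx ^ 3 * hz ^ 3 - P1 ^ 2) := by unfold S; ring
    rw [he]
    exact dvd_sub hS (dvd_mul_of_dvd_left (dvd_pow h2 two_ne_zero) _)
  rcases hp.dvd_mul.mp hdvd with h | h
  · rcases hp.dvd_mul.mp h with h | h
    · rcases hp.dvd_mul.mp h with h | h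
      · -- p ∣ hA
        have := dvd_of_prime_dvd_prime hp primeA h h2
        exact not_dvd_of_eval Φ ΦA (by rw [ΦP2]; norm_num) this
      · -- p ∣ P1 ^ 6 : then p ∣ hA * hx^6 * hz^3
        have h1 : p ∣ P1 := hp.dvd_of_dvd_pow h
        have hdvd2 : p ∣ hA * hx ^ 6 * hz ^ 3 := by
          have he : hA * hx ^ 6 * hz ^ 3 = P2 - P1 ^ 2 * (hA * hz ^ 3 - hy * hx ^ 2) := by
            unfold P2; ring
          rw [he]
          exact dvd_sub h2 (dvd_mul_of_dvd_left (dvd_pow h1 two_ne_zero) _)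
        rcases hp.dvd_mul.mp hdvd2 with h' | h'
        · rcases hp.dvd_mul.mp h' with h' | h'
          · have := dvd_of_prime_dvd_prime hp primeA h' h1
            exact not_dvd_of_eval Φ ΦA (by rw [ΦP1]; norm_num) this
          · have := dvd_of_prime_dvd_prime hp primeX0 (hp.dvd_of_dvd_pow h') h1
            exact not_dvd_of_eval ψ₁ ψ₁x (by rw [ψ₁P1]; exact Polynomial.X_ne_zero) this
        · have := dvd_of_prime_dvd_prime hp primeX2 (hp.dvd_of_dvd_pow h') h1
          exact not_dvd_of_eval ψ₂ ψ₂z (by rw [ψ₂P1]; norm_num) this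
    · -- p ∣ hx ^ 3
      have := dvd_of_prime_dvd_prime hp primeX0 (hp.dvd_of_dvd_pow h) h2
      exact not_dvd_of_eval ψ₁ ψ₁x
        (by rw [ψ₁P2]; exact pow_ne_zero _ Polynomial.X_ne_zero) this
  · -- p ∣ hz ^ 3
    have := dvd_of_prime_dvd_prime hp primeX2 (hp.dvd_of_dvd_pow h) h2
    exact not_dvd_of_eval ψ₂ ψ₂z (by rw [ψ₂P2]; norm_num) this

lemma coprimeQ : ∀ h : R3, h ∣ Q0 → h ∣ Q1 → h ∣ Q2 → IsUnit h := by
  intro h h0 h1 h2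
  by_contra hu
  have hne : h ≠ 0 := by
    rintro rfl
    exact Q1_ne_zero (zero_dvd_iff.mp h1)
  obtain ⟨p, hpirr, hpd⟩ := WfDvdMonoid.exists_irreducible_factor hu hne
  have hp : Prime p := UniqueFactorizationMonoid.irreducible_iff_prime.mp hpirr
  have p0 : p ∣ Q0 := hpd.trans h0
  have p1 : p ∣ Q1 := hpd.trans h1
  have p2 : p ∣ Q2 := hpd.trans h2
  have p1' : p ∣ hx * S ^ 3 := p1
  rcases hp.dvd_mul.mp p1' with hpx | hpS3
  · -- p ∣ x, hence x ∣ Q2, contradiction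
    have : hx ∣ Q2 := dvd_of_prime_dvd_prime hp primeX0 hpx p2
    exact not_dvd_of_eval ψ₁ ψ₁x
      (by rw [ψ₁Q2]; exact pow_ne_zero _ Polynomial.X_ne_zero) this
  · have hpS : p ∣ S := hp.dvd_of_dvd_pow hpS3
    have hdvd : p ∣ hA * hz ^ 3 * P1 ^ 6 * P2 ^ 6 := by
      have he : hA * hz ^ 3 * P1 ^ 6 * P2 ^ 6
          = hx ^ 2 * Q0 - hx ^ 3 * S ^ 3 + S ^ 2 * P2 ^ 3 := by linear_combination hKey
      rw [he]
      exact dvd_add (dvd_sub (dvd_mul_of_dvd_right p0 _)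
        (dvd_mul_of_dvd_right (dvd_pow hpS three_ne_zero) _))
        (dvd_mul_of_dvd_left (dvd_pow hpS two_ne_zero) _)
    rcases hp.dvd_mul.mp hdvd with hq | hq
    · rcases hp.dvd_mul.mp hq with hq' | hq'
      · rcases hp.dvd_mul.mp hq' with hq'' | hq''
        · -- p ∣ hA
          have : hA ∣ S := dvd_of_prime_dvd_prime hp primeA hq'' hpS
          exact not_dvd_of_eval Φ ΦA (by rw [ΦS]; norm_num) this
        · -- p ∣ hz ^ 3
          have : hz ∣ S := dvd_of_prime_dvd_prime hp primeX2 (hp.dvd_of_dvd_pow hq'') hpS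
          exact not_dvd_of_eval ψ₂ ψ₂z (by rw [ψ₂S]; norm_num) this
      · exact caseP1 hp (hp.dvd_of_dvd_pow hq') hpS
    · exact caseP2 hp (hp.dvd_of_dvd_pow hq) hpS

end

end HVAux

/-- The gcd of the three components of the fourth compositional iterate `φ⁴` of the
Hietarinta–Viallet map (a triple of homogeneous polynomials of degree 81) is a homogeneous
polynomial of degree 8; equivalently, dividing the components by this gcd leaves three
coprime homogeneous polynomials of degree 73. -/
theorem hv_fourth_iterate_gcd :
    ∃ g q₀ q₁ q₂ : MvPolynomial (Fin 3) (Polynomial ℤ),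
      g.IsHomogeneous 8 ∧
      q₀.IsHomogeneous 73 ∧ q₁.IsHomogeneous 73 ∧ q₂.IsHomogeneous 73 ∧
      (hvPhiZ^[4] (X 0, X 1, X 2)).1 = g * q₀ ∧
      (hvPhiZ^[4] (X 0, X 1, X 2)).2.1 = g * q₁ ∧
      (hvPhiZ^[4] (X 0, X 1, X 2)).2.2 = g * q₂ ∧
      (∀ h : MvPolynomial (Fin 3) (Polynomial ℤ),
        h ∣ (hvPhiZ^[4] (X 0, X 1, X 2)).1 → h ∣ (hvPhiZ^[4] (X 0, X 1, X 2)).2.1 →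
          h ∣ (hvPhiZ^[4] (X 0, X 1, X 2)).2.2 → h ∣ g) ∧
      (∀ h : MvPolynomial (Fin 3) (Polynomial ℤ),
        h ∣ q₀ → h ∣ q₁ → h ∣ q₂ → IsUnit h) := by
  classical
  open HVAux in
  refine ⟨hx ^ 8, Q0, Q1, Q2, homg, homQ0, homQ1, homQ2, ?_, ?_, ?_, ?_, coprimeQ⟩
  · rw [iterate4]
  · rw [iterate4]
  · rw [iterate4]
  · intro h h0 h1 h2
    rw [iterate4] at h0 h1 h2
    simp only at h0 h1 h2
    letI : NormalizationMonoid HVAux.R3 := (UniqueFactorizationMonoid.normalizationMonoid : StrongNormalizationMonoid HVAux.R3).toNormalizationMonoid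
    letI : GCDMonoid HVAux.R3 := UniqueFactorizationMonoid.toGCDMonoid HVAux.R3
    have assoc1 : Associated (gcd (hx ^ 8 * Q1) (hx ^ 8 * Q2)) (hx ^ 8 * gcd Q1 Q2) :=
      gcd_mul_left' _ _ _
    have hgd : h ∣ hx ^ 8 * gcd Q1 Q2 := (dvd_gcd h1 h2).trans assoc1.dvd
    have assoc2 : Associated (gcd (hx ^ 8 * Q0) (hx ^ 8 * gcd Q1 Q2))
        (hx ^ 8 * gcd Q0 (gcd Q1 Q2)) :=
      gcd_mul_left' _ _ _
    have hfin : h ∣ hx ^ 8 * gcd Q0 (gcd Q1 Q2) := (dvd_gcd h0 hgd).trans assoc2.dvd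
    have hunit : IsUnit (gcd Q0 (gcd Q1 Q2)) :=
      coprimeQ _ (gcd_dvd_left _ _) ((gcd_dvd_right _ _).trans (gcd_dvd_left _ _))
        ((gcd_dvd_right _ _).trans (gcd_dvd_right _ _))
    obtain ⟨u, hu⟩ := hunit
    refine hfin.trans ?_
    rw [← hu]
    exact ⟨(↑u⁻¹ : HVAux.R3), by simp [mul_assoc]⟩
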